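/- Let γ > 0, S₁,…,Sₙ symmetric PSD p×p matrices, and for Δ ∈ 𝒟ₙ⁺ define Q(Δ) = ((1/n)∑_j Δ_j S_j + γ I_p)⁻¹ and I(Δ)_i = (1/n)tr(S_i Q(Δ)). Then for all Δ, Δ' ∈ 𝒟ₙ⁺ with each I(Δ)_i, I(Δ')_i > 0: max_i |I(Δ)_i − I(Δ')_i|/√(I(Δ)_i I(Δ')_i) ≤ max(‖I_p − γQ(Δ)‖, ‖I_p − γQ(Δ')‖) · max_j |Δ_j − Δ'_j|/√(Δ_j Δ'_j). -/

import Mathlib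

/-- Spectral (ℓ²-operator) norm of a real square matrix. -/
noncomputable def specNorm {p : ℕ} (M : Matrix (Fin p) (Fin p) ℝ) : ℝ :=
  ‖Matrix.toEuclideanCLM (𝕜 := ℝ) M‖

/-- The resolvent `Q(Δ) = ((1/n) ∑ⱼ Δⱼ Sⱼ + γ Iₚ)⁻¹`. -/
noncomputable def resolv {p n : ℕ} (γ : ℝ) (S : Fin n → Matrix (Fin p) (Fin p) ℝ)
    (Δ : Fin n → ℝ) : Matrix (Fin p) (Fin p) ℝ :=
  ((n : ℝ)⁻¹ • ∑ j, Δ j • S j + γ • (1 : Matrix (Fin p) (Fin p) ℝ))⁻¹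

/-- `I(Δ)ᵢ = (1/n) tr(Sᵢ Q(Δ))`. -/
noncomputable def Ifun {p n : ℕ} (γ : ℝ) (S : Fin n → Matrix (Fin p) (Fin p) ℝ)
    (Δ : Fin n → ℝ) (i : Fin n) : ℝ :=
  (n : ℝ)⁻¹ * (S i * resolv γ S Δ).trace

open scoped MatrixOrder in
noncomputable def Matrix.PosSemidef.sqrt {p : ℕ} {A : Matrix (Fin p) (Fin p) ℝ}
    (_hA : A.PosSemidef) : Matrix (Fin p) (Fin p) ℝ := CFC.sqrt A

open scoped MatrixOrder in
lemma Matrix.PosSemidef.posSemidef_sqrt {p : ℕ} {A : Matrix (Fin p) (Fin p) ℝ}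
    (hA : A.PosSemidef) : hA.sqrt.PosSemidef := Matrix.nonneg_iff_posSemidef.mp (CFC.sqrt_nonneg A)

open scoped MatrixOrder in
lemma Matrix.PosSemidef.sqrt_mul_self {p : ℕ} {A : Matrix (Fin p) (Fin p) ℝ}
    (hA : A.PosSemidef) : hA.sqrt * hA.sqrt = A := CFC.sqrt_mul_sqrt_self A hA.nonneg

namespace IfunAux

open Matrix

variable {p n : ℕ}

lemma trace_form (X Y : Matrix (Fin p) (Fin p) ℝ) :
    (Xᵀ * Y).trace = ∑ kl : Fin p × Fin p, X kl.1 kl.2 * Y kl.1 kl.2 := by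
  rw [Fintype.sum_prod_type, Finset.sum_comm]
  simp [Matrix.trace, Matrix.diag, Matrix.mul_apply]

lemma trace_CS (X Y : Matrix (Fin p) (Fin p) ℝ) :
    (Xᵀ * Y).trace ^ 2 ≤ (Xᵀ * X).trace * (Yᵀ * Y).trace := by
  rw [trace_form, trace_form, trace_form]
  have h := Finset.sum_mul_sq_le_sq_mul_sq Finset.univ
    (fun kl : Fin p × Fin p => X kl.1 kl.2) (fun kl : Fin p × Fin p => Y kl.1 kl.2)
  simpa [sq] using h

lemma trace_tt_nonneg (X : Matrix (Fin p) (Fin p) ℝ) : 0 ≤ (Xᵀ * X).trace := by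
  rw [trace_form]
  exact Finset.sum_nonneg fun kl _ => mul_self_nonneg _

lemma dot_le_specNorm (M : Matrix (Fin p) (Fin p) ℝ) (x : Fin p → ℝ) :
    x ⬝ᵥ (M *ᵥ x) ≤ specNorm M * (x ⬝ᵥ x) := by
  set T := Matrix.toEuclideanCLM (𝕜 := ℝ) M with hT
  set y : EuclideanSpace ℝ (Fin p) := (WithLp.equiv 2 _).symm x with hy
  have h1 : T y = (WithLp.equiv 2 _).symm (M *ᵥ x) := by
    rw [hy, hT]; rfl
  have h2 : (inner ℝ y (T y) : ℝ) = x ⬝ᵥ (M *ᵥ x) := by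
    rw [h1]
    simp [PiLp.inner_apply, dotProduct, RCLike.inner_apply, hy, mul_comm]
  have h3 : (inner ℝ y y : ℝ) = x ⬝ᵥ x := by
    rw [hy, PiLp.inner_apply]
    simp [dotProduct, sq]
  have h4 : (inner ℝ y (T y) : ℝ) ≤ ‖y‖ * ‖T y‖ := real_inner_le_norm _ _
  have h5 : ‖T y‖ ≤ ‖T‖ * ‖y‖ := T.le_opNorm y
  have h6 : ‖y‖ * ‖y‖ = (inner ℝ y y : ℝ) := (real_inner_self_eq_norm_mul_norm y).symm
  have h7 : (inner ℝ y (T y) : ℝ) ≤ ‖T‖ * (inner ℝ y y : ℝ) := by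
    nlinarith [norm_nonneg y, norm_nonneg (T y), norm_nonneg T]
  rw [h2, h3] at h7
  exact h7

lemma smul_one_sub_posSemidef {M : Matrix (Fin p) (Fin p) ℝ} (hM : M.IsHermitian) :
    (specNorm M • (1 : Matrix (Fin p) (Fin p) ℝ) - M).PosSemidef := by
  refine Matrix.PosSemidef.of_dotProduct_mulVec_nonneg ?_ (fun x => ?_)
  · show _ᴴ = _
    rw [Matrix.conjTranspose_sub, Matrix.conjTranspose_smul, Matrix.conjTranspose_one, hM.eq]
    simp
  · have hd := dot_le_specNorm M x
    simp only [star_trivial, Matrix.sub_mulVec, Matrix.smul_mulVec, Matrix.one_mulVec,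
      dotProduct_sub, dotProduct_smul, smul_eq_mul]
    linarith

lemma psd_trace_nonneg {A : Matrix (Fin p) (Fin p) ℝ} (hA : A.PosSemidef) : 0 ≤ A.trace := by
  refine Finset.sum_nonneg fun i _ => ?_
  have h := hA.dotProduct_mulVec_nonneg (Pi.single i 1)
  simpa [dotProduct, Matrix.mulVec, Pi.single_apply, Finset.sum_ite_eq] using h

lemma psd_trace_mul_nonneg {A B : Matrix (Fin p) (Fin p) ℝ}
    (hA : A.PosSemidef) (hB : B.PosSemidef) : 0 ≤ (A * B).trace := by
  have h := hB.conjTranspose_mul_mul_same hA.sqrt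
  rw [hA.posSemidef_sqrt.1.eq] at h
  have h2 := psd_trace_nonneg h
  rwa [Matrix.trace_mul_cycle, hA.sqrt_mul_self] at h2

lemma herm_transpose {M : Matrix (Fin p) (Fin p) ℝ} (hM : M.IsHermitian) : Mᵀ = M := by
  rw [← Matrix.conjTranspose_eq_transpose_of_trivial, hM.eq]

lemma sandwich_trace {Si Sj R R' : Matrix (Fin p) (Fin p) ℝ}
    (hSi : Si.PosSemidef) (hSj : Sj.PosSemidef) (hR : Rᵀ = R) :
    ((hSj.sqrt * R * hSi.sqrt)ᵀ * (hSj.sqrt * R' * hSi.sqrt)).trace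
      = (Si * R * Sj * R').trace := by
  set a := hSj.sqrt with hadef
  set b := hSi.sqrt with hbdef
  have hat : aᵀ = a := herm_transpose hSj.posSemidef_sqrt.1
  have hbt : bᵀ = b := herm_transpose hSi.posSemidef_sqrt.1
  have hT : (a * R * b)ᵀ = b * R * a := by
    rw [Matrix.transpose_mul, Matrix.transpose_mul, hR, hat, hbt, Matrix.mul_assoc]
  rw [hT]
  have hmain : (b * R * a) * (a * R' * b) = b * (R * (a * a) * R') * b := by
    simp only [Matrix.mul_assoc]
  rw [hmain, hSj.sqrt_mul_self, Matrix.trace_mul_cycle, ← Matrix.mul_assoc, hSi.sqrt_mul_self]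
  simp only [Matrix.mul_assoc]

lemma quad_trace_nonneg {Si Sj Q : Matrix (Fin p) (Fin p) ℝ}
    (hSi : Si.PosSemidef) (hSj : Sj.PosSemidef) (hQ : Qᵀ = Q) :
    0 ≤ (Si * Q * Sj * Q).trace := by
  rw [← sandwich_trace hSi hSj hQ (R' := Q)]
  exact trace_tt_nonneg _

lemma cross_CS {Si Sj Q Q' : Matrix (Fin p) (Fin p) ℝ}
    (hSi : Si.PosSemidef) (hSj : Sj.PosSemidef) (hQ : Qᵀ = Q) (hQ' : Q'ᵀ = Q') :
    |(Si * Q * Sj * Q').trace| ≤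
      Real.sqrt ((Si * Q * Sj * Q).trace * (Si * Q' * Sj * Q').trace) := by
  have h := trace_CS (hSj.sqrt * Q * hSi.sqrt) (hSj.sqrt * Q' * hSi.sqrt)
  rw [sandwich_trace hSi hSj hQ, sandwich_trace hSi hSj hQ,
      sandwich_trace hSi hSj hQ'] at h
  calc |(Si * Q * Sj * Q').trace| = Real.sqrt ((Si * Q * Sj * Q').trace ^ 2) :=
        (Real.sqrt_sq_eq_abs _).symm
    _ ≤ _ := Real.sqrt_le_sqrt h

lemma spec_bound {Q Si : Matrix (Fin p) (Fin p) ℝ} (hQ : Q.PosSemidef) (hSi : Si.PosSemidef)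
    (γ : ℝ) :
    (Si * (Q - γ • (Q * Q))).trace ≤ specNorm (1 - γ • Q) * (Si * Q).trace := by
  set m := specNorm (1 - γ • Q) with hm
  have h1 : (1 - γ • Q : Matrix (Fin p) (Fin p) ℝ).IsHermitian := by
    show _ᴴ = _
    rw [Matrix.conjTranspose_sub, Matrix.conjTranspose_smul, Matrix.conjTranspose_one, hQ.1.eq]
    simp
  have h2 : ((m • 1 - (1 - γ • Q)) : Matrix (Fin p) (Fin p) ℝ).PosSemidef :=
    smul_one_sub_posSemidef h1
  have h3 : (hQ.sqrt * (m • 1 - (1 - γ • Q)) * hQ.sqrt).PosSemidef := by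
    have := h2.conjTranspose_mul_mul_same hQ.sqrt
    rwa [hQ.posSemidef_sqrt.1.eq] at this
  have key : ∀ s : Matrix (Fin p) (Fin p) ℝ, s * s = Q →
      s * (m • 1 - (1 - γ • Q)) * s = m • Q - (Q - γ • (Q * Q)) := by
    intro s hs
    rw [← hs]
    simp only [Matrix.mul_sub, Matrix.sub_mul, Matrix.mul_smul, Matrix.smul_mul,
      Matrix.mul_one, Matrix.one_mul, Matrix.mul_assoc]
  have h4 := key hQ.sqrt hQ.sqrt_mul_self
  rw [h4] at h3
  have h5 : 0 ≤ (Si * (m • Q - (Q - γ • (Q * Q)))).trace := psd_trace_mul_nonneg hSi h3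
  have h6 : (Si * (m • Q - (Q - γ • (Q * Q)))).trace
      = m * (Si * Q).trace - (Si * (Q - γ • (Q * Q))).trace := by
    simp only [Matrix.mul_sub, Matrix.trace_sub, Matrix.mul_smul, Matrix.trace_smul,
      smul_eq_mul]
  linarith

noncomputable def Amat (γ : ℝ) (S : Fin n → Matrix (Fin p) (Fin p) ℝ) (Δ : Fin n → ℝ) :
    Matrix (Fin p) (Fin p) ℝ :=
  (n : ℝ)⁻¹ • ∑ j, Δ j • S j + γ • 1

lemma resolv_eq (γ : ℝ) (S : Fin n → Matrix (Fin p) (Fin p) ℝ) (Δ : Fin n → ℝ) :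
    resolv γ S Δ = (Amat γ S Δ)⁻¹ := rfl

lemma dot_sum_smul (S : Fin n → Matrix (Fin p) (Fin p) ℝ) (Δ : Fin n → ℝ) (x : Fin p → ℝ) :
    x ⬝ᵥ ((∑ j, Δ j • S j) *ᵥ x) = ∑ j, Δ j * (x ⬝ᵥ (S j *ᵥ x)) := by
  simp only [Matrix.mulVec, dotProduct, Matrix.sum_apply, Matrix.smul_apply, smul_eq_mul,
    Finset.mul_sum, Finset.sum_mul]
  have h1 : ∀ k : Fin p, ∑ l : Fin p, ∑ j : Fin n, x k * (Δ j * S j k l * x l)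
      = ∑ j : Fin n, ∑ l : Fin p, x k * (Δ j * S j k l * x l) := fun k => Finset.sum_comm
  simp only [h1]
  rw [Finset.sum_comm]
  refine Finset.sum_congr rfl fun j _ => Finset.sum_congr rfl fun k _ => ?_
  refine Finset.sum_congr rfl fun l _ => by ring

lemma Amat_posDef {γ : ℝ} (hγ : 0 < γ) {S : Fin n → Matrix (Fin p) (Fin p) ℝ}
    (hS : ∀ i, (S i).PosSemidef) {Δ : Fin n → ℝ} (hΔ : ∀ i, 0 ≤ Δ i) :
    (Amat γ S Δ).PosDef := by
  apply Matrix.PosDef.posSemidef_add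
  · refine Matrix.PosSemidef.of_dotProduct_mulVec_nonneg ?_ (fun x => ?_)
    · show _ᴴ = _
      rw [Matrix.conjTranspose_smul, Matrix.conjTranspose_sum]
      simp only [Matrix.conjTranspose_smul, star_trivial]
      congr 1
      exact Finset.sum_congr rfl fun j _ => by rw [(hS j).1.eq]
    · simp only [Matrix.smul_mulVec, dotProduct_smul, star_trivial, smul_eq_mul]
      refine mul_nonneg (by positivity) ?_
      rw [dot_sum_smul]
      refine Finset.sum_nonneg fun j _ => mul_nonneg (hΔ j) ?_
      simpa using (hS j).dotProduct_mulVec_nonneg x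
  · refine Matrix.PosDef.of_dotProduct_mulVec_pos ?_ (@fun x hx => ?_)
    · show _ᴴ = _
      simp
    · rw [Matrix.smul_mulVec, dotProduct_smul, Matrix.one_mulVec, smul_eq_mul]
      refine mul_pos hγ ?_
      simp only [star_trivial]
      have h := dotProduct_star_self_pos_iff (v := x)
      simp only [star_trivial] at h
      exact h.mpr hx

lemma resolv_posDef {γ : ℝ} (hγ : 0 < γ) {S : Fin n → Matrix (Fin p) (Fin p) ℝ}
    (hS : ∀ i, (S i).PosSemidef) {Δ : Fin n → ℝ} (hΔ : ∀ i, 0 ≤ Δ i) :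
    (resolv γ S Δ).PosDef := by
  rw [resolv_eq]; exact (Amat_posDef hγ hS hΔ).inv

lemma Amat_mul_resolv {γ : ℝ} (hγ : 0 < γ) {S : Fin n → Matrix (Fin p) (Fin p) ℝ}
    (hS : ∀ i, (S i).PosSemidef) {Δ : Fin n → ℝ} (hΔ : ∀ i, 0 ≤ Δ i) :
    Amat γ S Δ * resolv γ S Δ = 1 := by
  rw [resolv_eq]
  exact Matrix.mul_nonsing_inv _
    ((Matrix.isUnit_iff_isUnit_det _).mp (Amat_posDef hγ hS hΔ).isUnit)

lemma resolv_mul_Amat {γ : ℝ} (hγ : 0 < γ) {S : Fin n → Matrix (Fin p) (Fin p) ℝ}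
    (hS : ∀ i, (S i).PosSemidef) {Δ : Fin n → ℝ} (hΔ : ∀ i, 0 ≤ Δ i) :
    resolv γ S Δ * Amat γ S Δ = 1 := by
  rw [resolv_eq]
  exact Matrix.nonsing_inv_mul _
    ((Matrix.isUnit_iff_isUnit_det _).mp (Amat_posDef hγ hS hΔ).isUnit)

lemma Ifun_diff {γ : ℝ} (hγ : 0 < γ) {S : Fin n → Matrix (Fin p) (Fin p) ℝ}
    (hS : ∀ i, (S i).PosSemidef) {Δ Δ' : Fin n → ℝ} (hΔ : ∀ i, 0 ≤ Δ i)
    (hΔ' : ∀ i, 0 ≤ Δ' i) (i : Fin n) :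
    Ifun γ S Δ i - Ifun γ S Δ' i
      = (n : ℝ)⁻¹ * ((n : ℝ)⁻¹ *
          ∑ j, (Δ' j - Δ j) * (S i * resolv γ S Δ * S j * resolv γ S Δ').trace) := by
  set Q := resolv γ S Δ with hQdef
  set Q' := resolv γ S Δ' with hQ'def
  have h1 : Q * (Amat γ S Δ' - Amat γ S Δ) * Q' = Q - Q' := by
    rw [Matrix.mul_sub, Matrix.sub_mul, Matrix.mul_assoc, Amat_mul_resolv hγ hS hΔ',
      Matrix.mul_one, resolv_mul_Amat hγ hS hΔ, Matrix.one_mul]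
  have h2 : Amat γ S Δ' - Amat γ S Δ = (n : ℝ)⁻¹ • ∑ j, (Δ' j - Δ j) • S j := by
    have h3 : ∑ j, (Δ' j - Δ j) • S j = (∑ j, Δ' j • S j) - ∑ j, Δ j • S j := by
      rw [← Finset.sum_sub_distrib]
      exact Finset.sum_congr rfl fun j _ => sub_smul _ _ _
    rw [Amat, Amat, h3, smul_sub]
    abel
  have h4 : (S i * (Q - Q')).trace
      = (n : ℝ)⁻¹ * ∑ j, (Δ' j - Δ j) * (S i * Q * S j * Q').trace := by
    rw [← h1, h2]
    simp only [Matrix.mul_sum, Matrix.sum_mul, Matrix.mul_smul, Matrix.smul_mul,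
      Matrix.trace_sum, Matrix.trace_smul, smul_eq_mul, Finset.mul_sum, Matrix.mul_assoc]
  have h5 : Ifun γ S Δ i - Ifun γ S Δ' i = (n : ℝ)⁻¹ * (S i * (Q - Q')).trace := by
    simp only [Ifun, ← hQdef, ← hQ'def, Matrix.mul_sub, Matrix.trace_sub, mul_sub]
  rw [h5, h4]

lemma sum_collapse (hn : (n : ℝ) ≠ 0) {γ : ℝ} (hγ : 0 < γ)
    {S : Fin n → Matrix (Fin p) (Fin p) ℝ} (hS : ∀ i, (S i).PosSemidef)
    {Δ : Fin n → ℝ} (hΔ : ∀ i, 0 ≤ Δ i) (i : Fin n) :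
    ∑ j, Δ j * (S i * resolv γ S Δ * S j * resolv γ S Δ).trace
      = (n : ℝ) * (S i * (resolv γ S Δ - γ • (resolv γ S Δ * resolv γ S Δ))).trace := by
  set Q := resolv γ S Δ with hQdef
  have hSig : ∑ j, Δ j • S j = (n : ℝ) • (Amat γ S Δ - γ • 1) := by
    rw [Amat, add_sub_cancel_right, smul_smul, mul_inv_cancel₀ hn, one_smul]
  have h1 : ∑ j, Δ j * (S i * Q * S j * Q).trace
      = (S i * Q * (∑ j, Δ j • S j) * Q).trace := by
    simp only [Matrix.mul_sum, Matrix.sum_mul, Matrix.mul_smul, Matrix.smul_mul,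
      Matrix.trace_sum, Matrix.trace_smul, smul_eq_mul, Finset.mul_sum, Matrix.mul_assoc]
  rw [h1, hSig, Matrix.mul_smul, Matrix.smul_mul, Matrix.trace_smul, smul_eq_mul]
  congr 1
  have h2 : S i * Q * (Amat γ S Δ - γ • 1) * Q = S i * (Q - γ • (Q * Q)) := by
    rw [Matrix.mul_sub, Matrix.mul_smul, Matrix.mul_one, Matrix.sub_mul, Matrix.smul_mul,
      Matrix.mul_assoc (S i) Q (Amat γ S Δ), resolv_mul_Amat hγ hS hΔ, Matrix.mul_one,
      Matrix.mul_sub, Matrix.mul_smul, Matrix.mul_assoc]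
  rw [h2]

end IfunAux

open IfunAux Matrix in
theorem Ifun_contracting {p n : ℕ} (hn : 0 < n) (γ : ℝ) (hγ : 0 < γ)
    (S : Fin n → Matrix (Fin p) (Fin p) ℝ) (hS : ∀ i, (S i).PosSemidef)
    (Δ Δ' : Fin n → ℝ) (hΔ : ∀ i, 0 < Δ i) (hΔ' : ∀ i, 0 < Δ' i)
    (hI : ∀ i, 0 < Ifun γ S Δ i) (hI' : ∀ i, 0 < Ifun γ S Δ' i) :
    (⨆ i, |Ifun γ S Δ i - Ifun γ S Δ' i| /
        Real.sqrt (Ifun γ S Δ i * Ifun γ S Δ' i)) ≤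
      max (specNorm (1 - γ • resolv γ S Δ)) (specNorm (1 - γ • resolv γ S Δ')) *
        ⨆ j, |Δ j - Δ' j| / Real.sqrt (Δ j * Δ' j) := by
  classical
  haveI : Nonempty (Fin n) := Fin.pos_iff_nonempty.mp hn
  have hn' : (0 : ℝ) < n := by exact_mod_cast hn
  have hnne : (n : ℝ) ≠ 0 := ne_of_gt hn'
  set Q := resolv γ S Δ with hQdef
  set Q' := resolv γ S Δ' with hQ'def
  have hΔ0 : ∀ i, 0 ≤ Δ i := fun i => (hΔ i).le
  have hΔ'0 : ∀ i, 0 ≤ Δ' i := fun i => (hΔ' i).le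
  have hQpd : Q.PosDef := resolv_posDef hγ hS hΔ0
  have hQ'pd : Q'.PosDef := resolv_posDef hγ hS hΔ'0
  have hQt : Qᵀ = Q := herm_transpose hQpd.1
  have hQ't : Q'ᵀ = Q' := herm_transpose hQ'pd.1
  set M := max (specNorm (1 - γ • Q)) (specNorm (1 - γ • Q')) with hM
  have hM0 : 0 ≤ M := le_trans (norm_nonneg _) (le_max_left _ _)
  set ε := ⨆ j, |Δ j - Δ' j| / Real.sqrt (Δ j * Δ' j) with hε
  have hbdd : BddAbove (Set.range fun j => |Δ j - Δ' j| / Real.sqrt (Δ j * Δ' j)) :=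
    Set.Finite.bddAbove (Set.finite_range _)
  have hε0 : 0 ≤ ε :=
    le_trans (by positivity) (le_ciSup hbdd (Classical.arbitrary (Fin n)))
  apply ciSup_le
  intro i
  have hIprod : 0 < Real.sqrt (Ifun γ S Δ i * Ifun γ S Δ' i) :=
    Real.sqrt_pos.mpr (mul_pos (hI i) (hI' i))
  rw [div_le_iff₀ hIprod]
  -- abbreviations
  set t : Fin n → ℝ := fun j => (S i * Q * S j * Q').trace with ht
  set a : Fin n → ℝ := fun j => (S i * Q * S j * Q).trace with ha
  set b : Fin n → ℝ := fun j => (S i * Q' * S j * Q').trace with hb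
  have ha0 : ∀ j, 0 ≤ a j := fun j => quad_trace_nonneg (hS i) (hS j) hQt
  have hb0 : ∀ j, 0 ≤ b j := fun j => quad_trace_nonneg (hS i) (hS j) hQ't
  -- identity
  have hId : Ifun γ S Δ i - Ifun γ S Δ' i
      = (n : ℝ)⁻¹ * ((n : ℝ)⁻¹ * ∑ j, (Δ' j - Δ j) * t j) :=
    Ifun_diff hγ hS hΔ0 hΔ'0 i
  -- per-j bound
  have hj : ∀ j, |(Δ' j - Δ j) * t j|
      ≤ ε * (Real.sqrt (Δ j * a j) * Real.sqrt (Δ' j * b j)) := by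
    intro j
    have hsqpos : 0 < Real.sqrt (Δ j * Δ' j) :=
      Real.sqrt_pos.mpr (mul_pos (hΔ j) (hΔ' j))
    have hc : |Δ' j - Δ j| ≤ ε * Real.sqrt (Δ j * Δ' j) := by
      rw [abs_sub_comm]
      have := le_ciSup hbdd j
      rw [div_le_iff₀ hsqpos] at this
      exact this
    have hcs : |t j| ≤ Real.sqrt (a j * b j) := cross_CS (hS i) (hS j) hQt hQ't
    have hmul : |(Δ' j - Δ j) * t j| ≤ (ε * Real.sqrt (Δ j * Δ' j)) * Real.sqrt (a j * b j) := by
      rw [abs_mul]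
      exact mul_le_mul hc hcs (abs_nonneg _) (by positivity)
    refine hmul.trans_eq ?_
    rw [mul_assoc]
    congr 1
    rw [← Real.sqrt_mul (mul_nonneg (hΔ0 j) (hΔ'0 j)),
      ← Real.sqrt_mul (mul_nonneg (hΔ0 j) (ha0 j))]
    congr 1
    rw [mul_mul_mul_comm]
  -- sum bound with Cauchy-Schwarz
  have hsum : ∑ j, |(Δ' j - Δ j) * t j|
      ≤ ε * (Real.sqrt (∑ j, Δ j * a j) * Real.sqrt (∑ j, Δ' j * b j)) := by
    calc ∑ j, |(Δ' j - Δ j) * t j|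
        ≤ ∑ j, ε * (Real.sqrt (Δ j * a j) * Real.sqrt (Δ' j * b j)) :=
          Finset.sum_le_sum fun j _ => hj j
      _ = ε * ∑ j, Real.sqrt (Δ j * a j) * Real.sqrt (Δ' j * b j) := by
          rw [Finset.mul_sum]
      _ ≤ ε * (Real.sqrt (∑ j, Δ j * a j) * Real.sqrt (∑ j, Δ' j * b j)) := by
          refine mul_le_mul_of_nonneg_left ?_ hε0
          exact Real.sum_sqrt_mul_sqrt_le _ (fun j => mul_nonneg (hΔ0 j) (ha0 j))
            (fun j => mul_nonneg (hΔ'0 j) (hb0 j))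
  -- collapse sums
  have htrA : (S i * Q).trace = (n : ℝ) * Ifun γ S Δ i := by
    rw [Ifun, ← hQdef, ← mul_assoc, mul_inv_cancel₀ hnne, one_mul]
  have htrB : (S i * Q').trace = (n : ℝ) * Ifun γ S Δ' i := by
    rw [Ifun, ← hQ'def, ← mul_assoc, mul_inv_cancel₀ hnne, one_mul]
  have hcolA : ∑ j, Δ j * a j ≤ (n : ℝ) ^ 2 * (M * Ifun γ S Δ i) := by
    have h1 := sum_collapse hnne hγ hS hΔ0 i
    rw [← hQdef] at h1
    have h2 := spec_bound hQpd.posSemidef (hS i) γ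
    have h3 : specNorm (1 - γ • Q) ≤ M := le_max_left _ _
    have h4 : 0 ≤ (S i * Q).trace := by
      rw [htrA]; exact mul_nonneg hn'.le (hI i).le
    calc ∑ j, Δ j * a j = (n : ℝ) * (S i * (Q - γ • (Q * Q))).trace := h1
      _ ≤ (n : ℝ) * (specNorm (1 - γ • Q) * (S i * Q).trace) := by
          exact mul_le_mul_of_nonneg_left h2 hn'.le
      _ ≤ (n : ℝ) * (M * (S i * Q).trace) := by
          refine mul_le_mul_of_nonneg_left ?_ hn'.le
          exact mul_le_mul_of_nonneg_right h3 h4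
      _ = (n : ℝ) ^ 2 * (M * Ifun γ S Δ i) := by rw [htrA]; ring
  have hcolB : ∑ j, Δ' j * b j ≤ (n : ℝ) ^ 2 * (M * Ifun γ S Δ' i) := by
    have h1 := sum_collapse hnne hγ hS hΔ'0 i
    rw [← hQ'def] at h1
    have h2 := spec_bound hQ'pd.posSemidef (hS i) γ
    have h3 : specNorm (1 - γ • Q') ≤ M := le_max_right _ _
    have h4 : 0 ≤ (S i * Q').trace := by
      rw [htrB]; exact mul_nonneg hn'.le (hI' i).le
    calc ∑ j, Δ' j * b j = (n : ℝ) * (S i * (Q' - γ • (Q' * Q'))).trace := h1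
      _ ≤ (n : ℝ) * (specNorm (1 - γ • Q') * (S i * Q').trace) := by
          exact mul_le_mul_of_nonneg_left h2 hn'.le
      _ ≤ (n : ℝ) * (M * (S i * Q').trace) := by
          refine mul_le_mul_of_nonneg_left ?_ hn'.le
          exact mul_le_mul_of_nonneg_right h3 h4
      _ = (n : ℝ) ^ 2 * (M * Ifun γ S Δ' i) := by rw [htrB]; ring
  -- combine square roots
  have hsqrtprod : Real.sqrt (∑ j, Δ j * a j) * Real.sqrt (∑ j, Δ' j * b j)
      ≤ (n : ℝ) ^ 2 * M * Real.sqrt (Ifun γ S Δ i * Ifun γ S Δ' i) := by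
    have e1 : Real.sqrt (∑ j, Δ j * a j) ≤ Real.sqrt ((n : ℝ) ^ 2 * (M * Ifun γ S Δ i)) :=
      Real.sqrt_le_sqrt hcolA
    have e2 : Real.sqrt (∑ j, Δ' j * b j) ≤ Real.sqrt ((n : ℝ) ^ 2 * (M * Ifun γ S Δ' i)) :=
      Real.sqrt_le_sqrt hcolB
    have e3 : Real.sqrt (∑ j, Δ j * a j) * Real.sqrt (∑ j, Δ' j * b j)
        ≤ Real.sqrt ((n : ℝ) ^ 2 * (M * Ifun γ S Δ i))
          * Real.sqrt ((n : ℝ) ^ 2 * (M * Ifun γ S Δ' i)) :=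
      mul_le_mul e1 e2 (Real.sqrt_nonneg _) (Real.sqrt_nonneg _)
    refine e3.trans_eq ?_
    rw [← Real.sqrt_mul (mul_nonneg (by positivity) (mul_nonneg hM0 (hI i).le))]
    have e4 : (n : ℝ) ^ 2 * (M * Ifun γ S Δ i) * ((n : ℝ) ^ 2 * (M * Ifun γ S Δ' i))
        = ((n : ℝ) ^ 2 * M) ^ 2 * (Ifun γ S Δ i * Ifun γ S Δ' i) := by ring
    rw [e4, Real.sqrt_mul (sq_nonneg _), Real.sqrt_sq (mul_nonneg (by positivity) hM0)]
  -- final chain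
  have hfinal : |Ifun γ S Δ i - Ifun γ S Δ' i|
      ≤ M * ε * Real.sqrt (Ifun γ S Δ i * Ifun γ S Δ' i) := by
    have h0 : |Ifun γ S Δ i - Ifun γ S Δ' i|
        = (n : ℝ)⁻¹ * ((n : ℝ)⁻¹ * |∑ j, (Δ' j - Δ j) * t j|) := by
      rw [hId, abs_mul, abs_mul, abs_of_nonneg (by positivity : (0:ℝ) ≤ (n : ℝ)⁻¹)]
    have h1 : |∑ j, (Δ' j - Δ j) * t j| ≤ ∑ j, |(Δ' j - Δ j) * t j| :=
      Finset.abs_sum_le_sum_abs _ _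
    have h2 : |∑ j, (Δ' j - Δ j) * t j|
        ≤ ε * ((n : ℝ) ^ 2 * M * Real.sqrt (Ifun γ S Δ i * Ifun γ S Δ' i)) := by
      refine h1.trans (hsum.trans ?_)
      exact mul_le_mul_of_nonneg_left hsqrtprod hε0
    rw [h0]
    calc (n : ℝ)⁻¹ * ((n : ℝ)⁻¹ * |∑ j, (Δ' j - Δ j) * t j|)
        ≤ (n : ℝ)⁻¹ * ((n : ℝ)⁻¹ *
            (ε * ((n : ℝ) ^ 2 * M * Real.sqrt (Ifun γ S Δ i * Ifun γ S Δ' i)))) := by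
          refine mul_le_mul_of_nonneg_left ?_ (by positivity)
          exact mul_le_mul_of_nonneg_left h2 (by positivity)
      _ = M * ε * Real.sqrt (Ifun γ S Δ i * Ifun γ S Δ' i) := by
          field_simp
  exact hfinal
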